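/- Let K be a measurable space, F a real normed vector space, f ↦ ν_f an energy-measure assignment on (F, K), and ν a minimal energy-dominant measure. Let (f_i)_{i∈ℕ} be a sequence in F whose linear span is dense in F, and define p(x) := sup_{N∈ℕ} rank ((dν_{f_i,f_j}/dν)(x))_{i,j≤N}. Then p(x) ≥ 1 for ν-a.e. x ∈ K. -/

import Mathlib

open MeasureTheory

/-- The mutual measure value `ν_{f,g}(B) := (ν_{f+g}(B) − ν_f(B) − ν_g(B))/2`. -/
noncomputable def mutualEM {F K : Type*} [MeasurableSpace K] [Add F]
    (em : F → Measure K) (f g : F) (B : Set K) : ℝ :=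
  ((em (f + g) B).toReal - (em f B).toReal - (em g B).toReal) / 2

/-- An energy-measure assignment on `(F, K)`: each `f : F` is assigned a finite measure `ν_f`
on `K` such that (a) for every measurable `B`, `(f, g) ↦ ν_{f,g}(B)` is a (symmetric) bilinear
form on `F`, and (b) `(√(ν_f B) − √(ν_g B))² ≤ ν_{f−g}(B) ≤ 2‖f − g‖²` for all measurable `B`.
(Symmetry of the mutual form is automatic from its definition.) -/
structure EnergyMeasureAssignment (F K : Type*) [MeasurableSpace K]
    [NormedAddCommGroup F] [NormedSpace ℝ F] where
  em : F → Measure K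
  finite : ∀ f, IsFiniteMeasure (em f)
  add_left : ∀ (f₁ f₂ g : F) (B : Set K), MeasurableSet B →
    mutualEM em (f₁ + f₂) g B = mutualEM em f₁ g B + mutualEM em f₂ g B
  smul_left : ∀ (c : ℝ) (f g : F) (B : Set K), MeasurableSet B →
    mutualEM em (c • f) g B = c * mutualEM em f g B
  sqrt_diff_le : ∀ (f g : F) (B : Set K), MeasurableSet B →
    (Real.sqrt (em f B).toReal - Real.sqrt (em g B).toReal) ^ 2 ≤ (em (f - g) B).toReal
  le_norm : ∀ (f g : F) (B : Set K), MeasurableSet B →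
    (em (f - g) B).toReal ≤ 2 * ‖f - g‖ ^ 2

/-- `ν` is a minimal energy-dominant measure: it is σ-finite, dominates every energy measure,
and is absolutely continuous with respect to any other σ-finite measure that does so. -/
def IsMinimalEnergyDominant {F K : Type*} [MeasurableSpace K]
    [NormedAddCommGroup F] [NormedSpace ℝ F]
    (E : EnergyMeasureAssignment F K) (ν : Measure K) : Prop :=
  SigmaFinite ν ∧ (∀ f, E.em f ≪ ν) ∧
    ∀ ν' : Measure K, SigmaFinite ν' → (∀ f, E.em f ≪ ν') → ν ≪ ν'

section Aux

variable {F K : Type*} [MeasurableSpace K] [NormedAddCommGroup F] [NormedSpace ℝ F]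

lemma mutualEM_comm (em : F → Measure K) (f g : F) (B : Set K) :
    mutualEM em f g B = mutualEM em g f B := by
  unfold mutualEM
  rw [add_comm f g]
  ring

lemma EMA.zero_left (E : EnergyMeasureAssignment F K) (g : F) {B : Set K}
    (hB : MeasurableSet B) : mutualEM E.em 0 g B = 0 := by
  have h := E.smul_left 0 g g B hB
  rw [zero_smul] at h
  simpa using h

/-- Bilinearity extends the vanishing of the mutual form to the span. -/
lemma mutual_span_zero (E : EnergyMeasureAssignment F K) (S : Set F) {B : Set K}
    (hB : MeasurableSet B)
    (hbase : ∀ u ∈ S, ∀ v ∈ S, mutualEM E.em u v B = 0) :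
    ∀ u ∈ Submodule.span ℝ S, ∀ v ∈ Submodule.span ℝ S, mutualEM E.em u v B = 0 := by
  have step1 : ∀ u ∈ Submodule.span ℝ S, ∀ v ∈ S, mutualEM E.em u v B = 0 := by
    intro u hu
    induction hu using Submodule.span_induction with
    | mem x hx => exact fun v hv => hbase x hx v hv
    | zero => exact fun v _ => EMA.zero_left E v hB
    | add x y hx hy ihx ihy =>
        intro v hv
        rw [E.add_left x y v B hB, ihx v hv, ihy v hv]; ring
    | smul a x hx ihx =>
        intro v hv
        rw [E.smul_left a x v B hB, ihx v hv]; ring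
  intro u hu v hv
  rw [mutualEM_comm]
  induction hv using Submodule.span_induction with
  | mem x hx => rw [mutualEM_comm]; exact step1 u hu x hx
  | zero => exact EMA.zero_left E u hB
  | add x y hx hy ihx ihy => rw [E.add_left x y u B hB, ihx, ihy]; ring
  | smul a x hx ihx => rw [E.smul_left a x u B hB, ihx]; ring

/-- If the mutual form vanishes identically on a span for a set `B`, then each energy measure
of a span element vanishes on `B`. -/
lemma em_span_zero (E : EnergyMeasureAssignment F K) (S : Set F) {B : Set K}
    (hB : MeasurableSet B)
    (hbase : ∀ u ∈ S, ∀ v ∈ S, mutualEM E.em u v B = 0)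
    {g : F} (hg : g ∈ Submodule.span ℝ S) : (E.em g B).toReal = 0 := by
  have hmut := mutual_span_zero E S hB hbase
  have half : ∀ h ∈ Submodule.span ℝ S,
      (E.em h B).toReal = 2 * (E.em ((2⁻¹ : ℝ) • h) B).toReal := by
    intro h hh
    have hmem : (2⁻¹ : ℝ) • h ∈ Submodule.span ℝ S := Submodule.smul_mem _ _ hh
    have h0 : mutualEM E.em ((2⁻¹ : ℝ) • h) ((2⁻¹ : ℝ) • h) B = 0 := hmut _ hmem _ hmem
    have hsum : (2⁻¹ : ℝ) • h + (2⁻¹ : ℝ) • h = h := by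
      rw [← two_smul ℝ, smul_smul]; norm_num
    unfold mutualEM at h0
    rw [hsum] at h0
    linarith
  have iter : ∀ n : ℕ,
      (E.em g B).toReal = 2 ^ n * (E.em (((2⁻¹ : ℝ) ^ n) • g) B).toReal := by
    intro n
    induction n with
    | zero => simp
    | succ n ih =>
      have hmem : ((2⁻¹ : ℝ) ^ n) • g ∈ Submodule.span ℝ S := Submodule.smul_mem _ _ hg
      calc (E.em g B).toReal
          = 2 ^ n * (E.em (((2⁻¹ : ℝ) ^ n) • g) B).toReal := ih
        _ = 2 ^ n * (2 * (E.em ((2⁻¹ : ℝ) • (((2⁻¹ : ℝ) ^ n) • g)) B).toReal) := by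
            rw [half _ hmem]
        _ = 2 ^ (n + 1) * (E.em (((2⁻¹ : ℝ) ^ (n + 1)) • g) B).toReal := by
            rw [smul_smul, ← pow_succ']; ring
  have bound : ∀ n : ℕ, (E.em g B).toReal ≤ 2 * (2⁻¹ : ℝ) ^ n * ‖g‖ ^ 2 := by
    intro n
    have h1 := E.le_norm (((2⁻¹ : ℝ) ^ n) • g) 0 B hB
    rw [sub_zero] at h1
    have hnorm : ‖((2⁻¹ : ℝ) ^ n) • g‖ = (2⁻¹ : ℝ) ^ n * ‖g‖ := by
      rw [norm_smul, Real.norm_eq_abs, abs_of_nonneg (by positivity)]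
    rw [hnorm] at h1
    have h2 : (2 : ℝ) ^ n * (E.em (((2⁻¹ : ℝ) ^ n) • g) B).toReal
        ≤ 2 ^ n * (2 * ((2⁻¹ : ℝ) ^ n * ‖g‖) ^ 2) :=
      mul_le_mul_of_nonneg_left h1 (by positivity)
    have key : (2 : ℝ) ^ n * (2 * ((2⁻¹ : ℝ) ^ n * ‖g‖) ^ 2)
        = 2 * (2⁻¹ : ℝ) ^ n * ‖g‖ ^ 2 := by
      have h2n : (2 : ℝ) ^ n ≠ 0 := by positivity
      rw [inv_pow]
      field_simp
    rw [iter n]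
    linarith [h2, key.le, key.ge]
  have htend : Filter.Tendsto (fun n : ℕ => 2 * (2⁻¹ : ℝ) ^ n * ‖g‖ ^ 2)
      Filter.atTop (nhds 0) := by
    have h0 : Filter.Tendsto (fun n : ℕ => ((2 : ℝ)⁻¹) ^ n) Filter.atTop (nhds 0) :=
      tendsto_pow_atTop_nhds_zero_of_lt_one (by norm_num) (by norm_num)
    have := (h0.const_mul 2).mul_const (‖g‖ ^ 2)
    simpa using this
  have hle : (E.em g B).toReal ≤ 0 := ge_of_tendsto' htend bound
  exact le_antisymm hle ENNReal.toReal_nonneg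

lemma rank_one_le_of_entry_ne_zero {M : ℕ} (A : Matrix (Fin M) (Fin M) ℝ) (i j : Fin M)
    (h : A i j ≠ 0) : 1 ≤ A.rank := by
  rw [Nat.one_le_iff_ne_zero, Matrix.rank]
  intro h0
  rw [Submodule.finrank_eq_zero] at h0
  have hy : A.mulVecLin (Pi.single j 1) ∈ LinearMap.range A.mulVecLin := ⟨_, rfl⟩
  rw [h0, Submodule.mem_bot] at hy
  have := congrFun hy i
  simp [Matrix.mulVecLin, Matrix.mulVec_single] at this
  exact h this

end Aux

/-- Proposition 2.8 of the paper: the pointwise index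
`p(x) = sup_N rank ((dν_{f_i,f_j}/dν)(x))_{i,j<N}` is at least `1` for ν-a.e. `x`. -/
theorem stmt12 {F K : Type*} [MeasurableSpace K] [NormedAddCommGroup F] [NormedSpace ℝ F]
    (E : EnergyMeasureAssignment F K) (ν : Measure K)
    (hν : IsMinimalEnergyDominant E ν)
    (f : ℕ → F) (hdense : Dense (Submodule.span ℝ (Set.range f) : Set F))
    (Z : ℕ → ℕ → K → ℝ)
    (hZmeas : ∀ i j, Measurable (Z i j))
    (hZint : ∀ i j, Integrable (Z i j) ν)
    (hZ : ∀ (i j : ℕ) (B : Set K), MeasurableSet B →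
      mutualEM E.em (f i) (f j) B = ∫ x in B, Z i j x ∂ν) :
    ∀ᵐ x ∂ν, 1 ≤ ⨆ M : ℕ, ((Matrix.of fun i j : Fin M => Z i j x).rank : ℕ∞) := by
  obtain ⟨hσ, hdom, hmin⟩ := hν
  set A : Set K := {x | ∀ i j, Z i j x = 0} with hA_def
  have hA : MeasurableSet A := by
    have hAeq : A = ⋂ i, ⋂ j, (Z i j) ⁻¹' {0} := by
      ext x; simp [hA_def, Set.mem_iInter]
    rw [hAeq]
    exact MeasurableSet.iInter fun i => MeasurableSet.iInter fun j =>
      (hZmeas i j) (measurableSet_singleton 0)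
  have hbase : ∀ u ∈ Set.range f, ∀ v ∈ Set.range f, mutualEM E.em u v A = 0 := by
    rintro _ ⟨i, rfl⟩ _ ⟨j, rfl⟩
    rw [hZ i j A hA]
    exact setIntegral_eq_zero_of_forall_eq_zero fun x hx => hx i j
  have hemA : ∀ g : F, E.em g A = 0 := by
    intro g
    haveI := E.finite g
    have key : ∀ ε : ℝ, 0 < ε → (E.em g A).toReal ≤ 2 * ε ^ 2 := by
      intro ε hε
      obtain ⟨g', hg'mem, hdist⟩ := hdense.exists_dist_lt g hε
      have hg'span : g' ∈ Submodule.span ℝ (Set.range f) := hg'mem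
      have hq' : (E.em g' A).toReal = 0 := em_span_zero E _ hA hbase hg'span
      have h1 := E.sqrt_diff_le g g' A hA
      have h2 := E.le_norm g g' A hA
      rw [hq', Real.sqrt_zero, sub_zero, Real.sq_sqrt ENNReal.toReal_nonneg] at h1
      have hnorm : ‖g - g'‖ < ε := by rwa [dist_eq_norm] at hdist
      nlinarith [norm_nonneg (g - g')]
    have hq : (E.em g A).toReal = 0 := by
      have h0 : (E.em g A).toReal ≤ 0 := by
        have := le_of_forall_pos_le_add (a := (E.em g A).toReal) (b := (0 : ℝ)) ?_
        · exact this
        intro ε hε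
        have hs : (0 : ℝ) < Real.sqrt (ε / 2) := Real.sqrt_pos.mpr (by linarith)
        have := key _ hs
        rw [Real.sq_sqrt (by linarith : (0:ℝ) ≤ ε / 2)] at this
        linarith
      exact le_antisymm h0 ENNReal.toReal_nonneg
    rw [ENNReal.toReal_eq_zero_iff] at hq
    exact hq.resolve_right (measure_ne_top _ _)
  have hac_all : ∀ g : F, E.em g ≪ ν.restrict Aᶜ := by
    intro g
    haveI := E.finite g
    intro s hs
    rw [Measure.restrict_apply' hA.compl] at hs
    have h1 : E.em g (s ∩ Aᶜ) = 0 := hdom g hs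
    have h2 : E.em g (s ∩ A) = 0 := measure_mono_null Set.inter_subset_right (hemA g)
    have hle : E.em g s ≤ E.em g (s ∩ A) + E.em g (s ∩ Aᶜ) := by
      calc E.em g s = E.em g (s ∩ A ∪ s ∩ Aᶜ) := by rw [Set.inter_union_compl]
        _ ≤ _ := measure_union_le _ _
    rw [h1, h2] at hle
    simpa using le_antisymm (by simpa using hle) (zero_le)
  haveI := hσ
  have hac := hmin (ν.restrict Aᶜ) inferInstance hac_all
  have hA0 : ν A = 0 := by
    refine hac ?_
    rw [Measure.restrict_apply' hA.compl]
    simp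
  have hae : ∀ᵐ x ∂ν, x ∉ A := by
    rw [ae_iff]
    convert hA0 using 2
    ext x
    simp
  filter_upwards [hae] with x hx
  have hx' : ¬ ∀ i j, Z i j x = 0 := hx
  push_neg at hx'
  obtain ⟨i, j, hij⟩ := hx'
  set M := max i j + 1 with hM
  have hi : i < M := Nat.lt_succ_of_le (le_max_left i j)
  have hj : j < M := Nat.lt_succ_of_le (le_max_right i j)
  have hrank : 1 ≤ (Matrix.of fun a b : Fin M => Z a b x).rank := by
    refine rank_one_le_of_entry_ne_zero _ ⟨i, hi⟩ ⟨j, hj⟩ ?_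
    simpa using hij
  calc (1 : ℕ∞) ≤ ((Matrix.of fun a b : Fin M => Z a b x).rank : ℕ∞) := by
        exact_mod_cast hrank
    _ ≤ ⨆ N : ℕ, ((Matrix.of fun a b : Fin N => Z a b x).rank : ℕ∞) :=
        le_iSup (fun N : ℕ => ((Matrix.of fun a b : Fin N => Z a b x).rank : ℕ∞)) M
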